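/- For all real numbers a, b with 0 < a < 1 and 0 < b < 1, one has ∫_{−π}^{π} |1 − a − e^{iω}| / |1 − b − e^{iω}|² dω = (2a²/(b²(1 − a/2))) · Π(α², k), where α² = (b²(1 − a) − a²(1 − b))/(b²(1 − a/2)²), k = √(1 − a)/(1 − a/2), and Π(α², k) = ∫_0^{π/2} dθ / ((1 − α² sin² θ)·√(1 − k² sin² θ)) is the complete elliptic integral of the third kind. -/

import Mathlib

open MeasureTheory Real

/-- The complete elliptic integral of the third kind,
`Π(α², k) = ∫ θ in [0, π/2], dθ / ((1 - α² sin² θ) √(1 - k² sin² θ))`. -/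
noncomputable def ellipticPi (alphaSq k : ℝ) : ℝ :=
  ∫ θ in Set.Icc 0 (π / 2),
    1 / ((1 - alphaSq * Real.sin θ ^ 2) * Real.sqrt (1 - k ^ 2 * Real.sin θ ^ 2))




private lemma norm_sq_aux (c ω : ℝ) :
    ‖(1 : ℂ) - (c : ℂ) - Complex.exp (Complex.I * (ω : ℂ))‖ ^ 2
      = c ^ 2 + 2 * (1 - c) * (1 - Real.cos ω) := by
  rw [mul_comm, Complex.exp_mul_I]
  have h1 : (1 : ℂ) - (c:ℂ) - (Complex.cos ω + Complex.sin ω * Complex.I)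
      = ((1 - c - Real.cos ω : ℝ) : ℂ) + ((-Real.sin ω : ℝ) : ℂ) * Complex.I := by
    push_cast
    ring
  rw [h1, Complex.sq_norm, Complex.normSq_add_mul_I]
  nlinarith [Real.sin_sq_add_cos_sq ω]

private lemma integral_even {c : ℝ} (f : ℝ → ℝ) (hf : ∀ x, f (-x) = f x)
    (hi : IntervalIntegrable f volume (-c) c) (hc : 0 ≤ c) :
    ∫ x in (-c)..c, f x = 2 * ∫ x in (0:ℝ)..c, f x := by
  have h1 : IntervalIntegrable f volume (-c) 0 := by
    apply hi.mono_set
    rw [Set.uIcc_of_le (by linarith : -c ≤ (0:ℝ)), Set.uIcc_of_le (by linarith : -c ≤ c)]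
    exact Set.Icc_subset_Icc le_rfl hc
  have h2 : IntervalIntegrable f volume 0 c := by
    apply hi.mono_set
    rw [Set.uIcc_of_le hc, Set.uIcc_of_le (by linarith : -c ≤ c)]
    exact Set.Icc_subset_Icc (by linarith) le_rfl
  have key : ∫ x in (-c)..(0:ℝ), f x = ∫ x in (0:ℝ)..c, f x := by
    have := intervalIntegral.integral_comp_neg (a := (0:ℝ)) (b := c) (f := f)
    simp only [neg_zero] at this
    rw [← this]
    congr 1
    funext x
    exact hf x
  rw [← intervalIntegral.integral_add_adjacent_intervals h1 h2, key, two_mul]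

noncomputable def phiFun (a θ : ℝ) : ℝ :=
  θ + Real.arctan ((1-a) * Real.sin (2*θ) / (1 - (1-a) * Real.cos (2*θ)))

private lemma one_sub_cos_two (θ : ℝ) : 1 - Real.cos (2*θ) = 2 * Real.sin θ ^ 2 := by
  rw [Real.cos_two_mul]; linear_combination (-2 : ℝ) * Real.sin_sq_add_cos_sq θ

section core

private lemma den_pos {a : ℝ} (ha0 : 0 < a) (ha1 : a < 1) (θ : ℝ) : 0 < 1 - (1-a) * Real.cos (2*θ) := by
  have h := mul_le_mul_of_nonneg_left (Real.cos_le_one (2*θ)) (by linarith : (0:ℝ) ≤ 1-a)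
  rw [mul_one] at h
  linarith

private lemma N2_pos {a : ℝ} (ha0 : 0 < a) (ha1 : a < 1) (θ : ℝ) : 0 < a^2 + 4*(1-a) * Real.sin θ^2 := by
  nlinarith [sq_nonneg (Real.sin θ)]

private lemma N2_eq (a θ : ℝ) :
    (1 - (1-a)*Real.cos (2*θ))^2 + ((1-a)*Real.sin (2*θ))^2
      = a^2 + 4*(1-a)*Real.sin θ^2 := by
  linear_combination ((1-a)^2) * Real.sin_sq_add_cos_sq (2*θ)
    + (2*(1-a)) * one_sub_cos_two θ

private lemma one_add_u_sq {a : ℝ} (ha0 : 0 < a) (ha1 : a < 1) (θ : ℝ) :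
    1 + ((1-a) * Real.sin (2*θ) / (1 - (1-a) * Real.cos (2*θ)))^2
      = (a^2 + 4*(1-a)*Real.sin θ^2) / (1 - (1-a) * Real.cos (2*θ))^2 := by
  have hd := den_pos ha0 ha1 θ
  field_simp
  linear_combination N2_eq a θ

private lemma hasDerivAt_phiFun {a : ℝ} (ha0 : 0 < a) (ha1 : a < 1) (θ : ℝ) :
    HasDerivAt (phiFun a) (a*(2-a) / (a^2 + 4*(1-a)*Real.sin θ^2)) θ := by
  have hd := den_pos ha0 ha1 θ
  have hN2 := N2_pos ha0 ha1 θ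
  have h2θ : HasDerivAt (fun x : ℝ => 2*x) 2 θ := by
    simpa using (hasDerivAt_id θ).const_mul 2
  have hs : HasDerivAt (fun x => Real.sin (2*x)) (Real.cos (2*θ) * 2) θ :=
    (Real.hasDerivAt_sin (2*θ)).comp θ h2θ
  have hc : HasDerivAt (fun x => Real.cos (2*x)) (-Real.sin (2*θ) * 2) θ :=
    (Real.hasDerivAt_cos (2*θ)).comp θ h2θ
  have hdd : HasDerivAt (fun x => 1 - (1-a)*Real.cos (2*x))
      (-((1-a) * (-Real.sin (2*θ) * 2))) θ := ((hc.const_mul (1-a)).const_sub 1)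
  have hu : HasDerivAt (fun x => (1-a) * Real.sin (2*x) / (1 - (1-a) * Real.cos (2*x)))
      ((((1-a) * (Real.cos (2*θ) * 2)) * (1 - (1-a)*Real.cos (2*θ))
          - ((1-a) * Real.sin (2*θ)) * (-((1-a) * (-Real.sin (2*θ) * 2))))
        / (1 - (1-a)*Real.cos (2*θ))^2) θ :=
    (hs.const_mul (1-a)).div hdd (ne_of_gt hd)
  have harc := hu.arctan
  have hfin := (hasDerivAt_id θ).add harc
  refine hfin.congr_deriv ?_
  symm
  rw [one_add_u_sq ha0 ha1 θ]
  field_simp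
  linear_combination (2*(1-a)^2) * Real.sin_sq_add_cos_sq (2*θ)
    + (2*(1-a)) * one_sub_cos_two θ


private lemma sqrt_one_add_u_sq {a : ℝ} (ha0 : 0 < a) (ha1 : a < 1) (θ : ℝ) :
    Real.sqrt (1 + ((1-a) * Real.sin (2*θ) / (1 - (1-a) * Real.cos (2*θ)))^2)
      = Real.sqrt (a^2 + 4*(1-a)*Real.sin θ^2) / (1 - (1-a) * Real.cos (2*θ)) := by
  rw [one_add_u_sq ha0 ha1 θ,
    Real.sqrt_div (le_of_lt (N2_pos ha0 ha1 θ)),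
    Real.sqrt_sq (le_of_lt (den_pos ha0 ha1 θ))]

private lemma sin_phiFun {a : ℝ} (ha0 : 0 < a) (ha1 : a < 1) (θ : ℝ) :
    Real.sin (phiFun a θ)
      = (2-a) * Real.sin θ / Real.sqrt (a^2 + 4*(1-a)*Real.sin θ^2) := by
  have hd := den_pos ha0 ha1 θ
  have hN2 := N2_pos ha0 ha1 θ
  have hsq : 0 < Real.sqrt (a^2+4*(1-a)*Real.sin θ^2) := Real.sqrt_pos.mpr hN2
  unfold phiFun
  rw [Real.sin_add, Real.sin_arctan, Real.cos_arctan, sqrt_one_add_u_sq ha0 ha1 θ,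
    one_div_div, div_div_div_cancel_right₀]
  have key : Real.sin θ * (1 - (1-a)*Real.cos (2*θ))
        + Real.cos θ * ((1-a) * Real.sin (2*θ)) = (2-a) * Real.sin θ := by
    rw [Real.sin_two_mul, Real.cos_two_mul]; ring
  have hX : 0 < a^2 + Real.sin θ^2*(1-a)*4 := by linarith
  have := Real.sqrt_pos.mpr hX
  field_simp
  linear_combination key
  exact ne_of_gt hd

private lemma aux_pos {c : ℝ} (hc : c < 1) (φ : ℝ) : 0 < 1 - c * Real.sin φ ^ 2 := by
  rcases le_or_gt c 0 with h | h
  · nlinarith [sq_nonneg (Real.sin φ)]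
  · nlinarith [Real.sin_sq_le_one φ, sq_nonneg (Real.sin φ)]

private lemma phiFun_zero (a : ℝ) : phiFun a 0 = 0 := by
  simp [phiFun]

private lemma phiFun_pi_div_two (a : ℝ) : phiFun a (π/2) = π/2 := by
  unfold phiFun
  rw [show 2*(π/2) = π by ring, Real.sin_pi]
  simp


private lemma pointwise_id {a b : ℝ} (ha0 : 0 < a) (ha1 : a < 1)
    (hb0 : 0 < b) (hb1 : b < 1) (θ : ℝ) :
    (a*(2-a) / (a^2 + 4*(1-a)*Real.sin θ^2)) *
      (1 / ((1 - ((b^2*(1-a) - a^2*(1-b)) / (b^2*(1-a/2)^2)) * Real.sin (phiFun a θ)^2)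
        * Real.sqrt (1 - (Real.sqrt (1-a)/(1-a/2))^2 * Real.sin (phiFun a θ)^2)))
    = ((2-a)*b^2/a^2) *
      (Real.sqrt (a^2+4*(1-a)*Real.sin θ^2) / (b^2 + 4*(1-b)*Real.sin θ^2)) := by
  have hN2 := N2_pos ha0 ha1 θ
  have hD := N2_pos hb0 hb1 θ
  have hsq : 0 < Real.sqrt (a^2+4*(1-a)*Real.sin θ^2) := Real.sqrt_pos.mpr hN2
  have ha2 : (0:ℝ) < 1 - a/2 := by linarith
  have h2a : (0:ℝ) < 2 - a := by linarith
  have hX : 0 < a^2 + (1-a)*Real.sin θ^2*4 := by linarith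
  have hX' : 0 < a^2 + Real.sin θ^2*(1-a)*4 := by linarith
  rw [sin_phiFun ha0 ha1 θ]
  have e4 : 1 - (Real.sqrt (1-a)/(1-a/2))^2 *
      ((2-a)*Real.sin θ / Real.sqrt (a^2+4*(1-a)*Real.sin θ^2))^2
      = (a / Real.sqrt (a^2+4*(1-a)*Real.sin θ^2))^2 := by
    rw [div_pow, div_pow, div_pow, Real.sq_sqrt (by linarith : (0:ℝ) ≤ 1-a),
      Real.sq_sqrt hN2.le]
    field_simp
    ring
  rw [e4, Real.sqrt_sq (by positivity)]
  have e3 : 1 - (b^2*(1-a) - a^2*(1-b)) / (b^2*(1-a/2)^2) *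
      ((2-a)*Real.sin θ / Real.sqrt (a^2+4*(1-a)*Real.sin θ^2))^2
      = a^2 * (b^2 + 4*(1-b)*Real.sin θ^2) /
        (b^2 * (a^2+4*(1-a)*Real.sin θ^2)) := by
    rw [div_pow, mul_pow, Real.sq_sqrt hN2.le]
    field_simp
    ring
  rw [e3]
  field_simp

end core


theorem integral_ratio_eq_ellipticPi (a b : ℝ) (ha0 : 0 < a) (ha1 : a < 1)
    (hb0 : 0 < b) (hb1 : b < 1) :
    (∫ ω in Set.Icc (-π) π,
        ‖(1 : ℂ) - (a : ℂ) - Complex.exp (Complex.I * (ω : ℂ))‖ /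
          ‖(1 : ℂ) - (b : ℂ) - Complex.exp (Complex.I * (ω : ℂ))‖ ^ 2)
      = (2 * a ^ 2 / (b ^ 2 * (1 - a / 2))) *
        ellipticPi ((b ^ 2 * (1 - a) - a ^ 2 * (1 - b)) / (b ^ 2 * (1 - a / 2) ^ 2))
          (Real.sqrt (1 - a) / (1 - a / 2)) := by
  have hpi := Real.pi_pos
  have ha2 : (0:ℝ) < 1 - a/2 := by linarith
  have h2a : (0:ℝ) < 2 - a := by linarith
  set A : ℝ := (b ^ 2 * (1 - a) - a ^ 2 * (1 - b)) / (b ^ 2 * (1 - a / 2) ^ 2) with hAdef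
  set K : ℝ := Real.sqrt (1 - a) / (1 - a / 2) with hKdef
  -- the real-valued integrands
  set h : ℝ → ℝ := fun θ =>
    Real.sqrt (a^2+4*(1-a)*Real.sin θ^2) / (b^2+4*(1-b)*Real.sin θ^2) with hhdef
  set g : ℝ → ℝ := fun φ =>
    1 / ((1 - A*Real.sin φ^2) * Real.sqrt (1 - K^2*Real.sin φ^2)) with hgdef
  -- continuity facts
  have hcontD : Continuous fun θ : ℝ => b^2+4*(1-b)*Real.sin θ^2 := by fun_prop
  have hcontN : Continuous fun θ : ℝ => a^2+4*(1-a)*Real.sin θ^2 := by fun_prop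
  have hconth : Continuous h := by
    rw [hhdef]
    exact (Real.continuous_sqrt.comp hcontN).div hcontD
      (fun θ => (N2_pos hb0 hb1 θ).ne')
  -- K^2 and positivity for g
  have hK2 : K^2 = (1-a)/(1-a/2)^2 := by
    rw [hKdef, div_pow, Real.sq_sqrt (by linarith : (0:ℝ) ≤ 1-a)]
  have hK1 : K^2 < 1 := by
    rw [hK2, div_lt_one (by positivity)]
    nlinarith
  have hA1 : A < 1 := by
    rw [hAdef, div_lt_one (by positivity)]
    nlinarith [sq_nonneg (a*b), sq_nonneg a, sq_nonneg b]
  have hgpos1 : ∀ φ : ℝ, 0 < 1 - A*Real.sin φ^2 := aux_pos hA1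
  have hgpos2 : ∀ φ : ℝ, 0 < 1 - K^2*Real.sin φ^2 := aux_pos hK1
  have hcontg : Continuous g := by
    rw [hgdef]
    refine continuous_const.div ?_ (fun φ => ?_)
    · fun_prop
    · exact (mul_pos (hgpos1 φ) (Real.sqrt_pos.mpr (hgpos2 φ))).ne'
  -- Step 1: rewrite the complex integrand as a real function
  have hFeq : ∀ ω : ℝ,
      ‖(1 : ℂ) - (a : ℂ) - Complex.exp (Complex.I * (ω : ℂ))‖ /
          ‖(1 : ℂ) - (b : ℂ) - Complex.exp (Complex.I * (ω : ℂ))‖ ^ 2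
        = Real.sqrt (a^2+2*(1-a)*(1-Real.cos ω)) / (b^2+2*(1-b)*(1-Real.cos ω)) := by
    intro ω
    have hn : ‖(1 : ℂ) - (a : ℂ) - Complex.exp (Complex.I * (ω : ℂ))‖
        = Real.sqrt (a^2+2*(1-a)*(1-Real.cos ω)) := by
      rw [← norm_sq_aux a ω, Real.sqrt_sq (norm_nonneg _)]
    rw [hn, norm_sq_aux b ω]
  -- Step 2: set integral to interval integral
  rw [MeasureTheory.integral_Icc_eq_integral_Ioc,
    ← intervalIntegral.integral_of_le (by linarith : -π ≤ π)]
  simp only [hFeq]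
  -- Step 3: substitute ω = 2θ
  have hsub2 : ∫ ω in (-π)..π,
      Real.sqrt (a^2+2*(1-a)*(1-Real.cos ω)) / (b^2+2*(1-b)*(1-Real.cos ω))
      = (2:ℝ) • ∫ x in (-(π/2))..(π/2),
        Real.sqrt (a^2+2*(1-a)*(1-Real.cos (2*x))) / (b^2+2*(1-b)*(1-Real.cos (2*x))) := by
    rw [intervalIntegral.smul_integral_comp_mul_left
      (fun ω => Real.sqrt (a^2+2*(1-a)*(1-Real.cos ω)) / (b^2+2*(1-b)*(1-Real.cos ω))) 2]
    congr 1 <;> ring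
  rw [hsub2]
  have hF2 : ∀ x : ℝ,
      Real.sqrt (a^2+2*(1-a)*(1-Real.cos (2*x))) / (b^2+2*(1-b)*(1-Real.cos (2*x))) = h x := by
    intro x
    rw [one_sub_cos_two x, hhdef]
    norm_num
    rw [show a^2+2*(1-a)*(2*Real.sin x^2) = a^2+4*(1-a)*Real.sin x^2 by ring,
      show b^2+2*(1-b)*(2*Real.sin x^2) = b^2+4*(1-b)*Real.sin x^2 by ring]
  simp only [hF2]
  -- Step 4: evenness
  have heven : ∫ x in (-(π/2))..(π/2), h x = 2 * ∫ x in (0:ℝ)..(π/2), h x := by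
    refine integral_even h (fun x => ?_) (hconth.intervalIntegrable _ _) (by linarith)
    rw [hhdef]
    simp [Real.sin_neg]
  rw [heven]
  -- Step 5: the elliptic side via change of variables
  have hPi : ellipticPi A K = ((2-a)*b^2/a^2) * ∫ x in (0:ℝ)..(π/2), h x := by
    have hgident : ellipticPi A K = ∫ φ in (0:ℝ)..(π/2), g φ := by
      unfold ellipticPi
      rw [MeasureTheory.integral_Icc_eq_integral_Ioc,
        ← intervalIntegral.integral_of_le (by linarith : (0:ℝ) ≤ π/2)]
    have hcov := intervalIntegral.integral_comp_smul_deriv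
      (f := phiFun a) (f' := fun θ => a*(2-a)/(a^2+4*(1-a)*Real.sin θ^2)) (g := g)
      (a := 0) (b := π/2)
      (fun x _ => hasDerivAt_phiFun ha0 ha1 x)
      ((continuous_const.div hcontN (fun θ => (N2_pos ha0 ha1 θ).ne')).continuousOn)
      hcontg
    rw [phiFun_zero, phiFun_pi_div_two] at hcov
    rw [hgident, ← hcov]
    rw [← intervalIntegral.integral_const_mul]
    refine intervalIntegral.integral_congr (fun x _ => ?_)
    simp only [smul_eq_mul, Function.comp_apply, hgdef, hhdef]
    exact pointwise_id ha0 ha1 hb0 hb1 x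
  rw [hPi]
  rw [smul_eq_mul]
  have hfin : 2 * a ^ 2 / (b ^ 2 * (1 - a / 2)) * ((2-a)*b^2/a^2) = 4 := by
    field_simp
    ring
  calc 2 * (2 * ∫ x in (0:ℝ)..(π/2), h x) = 4 * ∫ x in (0:ℝ)..(π/2), h x := by ring
    _ = 2 * a ^ 2 / (b ^ 2 * (1 - a / 2)) * ((2-a)*b^2/a^2 * ∫ x in (0:ℝ)..(π/2), h x) := by
        rw [← mul_assoc, hfin]
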